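/- Let H be a real Hilbert space with coercive symmetric bilinear form a and energy norm ⦀·⦀, and let b'(u) ≥ 0 define a nonnegative multiplication operator. Let ẑ ∈ H satisfy a(ẑ,v) + ⟨b'(u)ẑ,v⟩ = g(v) for all v ∈ H, and let u, u_j ∈ H with a(u - u_j, v) + ⟨b(u) - b(u_j), v⟩ = 0 for all v in a subspace V_j containing ẑ_j. Then g(u) - g(u_j) = a(u - u_j, ẑ - ẑ_j) + ⟨b(u) - b(u_j), ẑ - ẑ_j⟩ + ⟨(b'(u) - B_j)(u - u_j), ẑ⟩, where B_j = ∫₀¹ b'(u_j + ξ(u-u_j))dξ. -/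

import Mathlib

/-- Error representation identity (proof of Corollary 5.9), abstract form.
`H` carries the energy inner product `a = ⟪·,·⟫`; `c` is the `L₂` pairing.
`β` stands for `b(u) - b(u_j)` (which by the integral Taylor identity equals
`B_j (u - u_j)` with `B_j = ∫₀¹ b'(u_j + ξ(u - u_j)) dξ`), `p` for
`b'(u)(u - u_j)`, and `q` for `b'(u)ẑ`.  The limiting dual solution `ẑ`
satisfies `a(ẑ,v) + c(q,v) = g(v)` for all `v`; Galerkin orthogonality
`a(u - u_j, v) + c(β, v) = 0` holds for `v ∈ V_j ∋ ẑ_j`; self-adjointness of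
multiplication by `b'(u)` gives `c(q, u - u_j) = c(p, ẑ)`.  Then
`g(u) - g(u_j) = a(u - u_j, ẑ - ẑ_j) + ⟨b(u) - b(u_j), ẑ - ẑ_j⟩
  + ⟨(b'(u) - B_j)(u - u_j), ẑ⟩`. -/
theorem goal_error_representation
    {H : Type*} [NormedAddCommGroup H] [InnerProductSpace ℝ H]
    (Vj : Submodule ℝ H) (c : LinearMap.BilinForm ℝ H) (g : H →ₗ[ℝ] ℝ)
    (u uj z zj β p q : H) (hzj : zj ∈ Vj)
    (hdual : ∀ v : H, (inner ℝ z v : ℝ) + c q v = g v)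
    (hGal : ∀ v ∈ Vj, (inner ℝ (u - uj) v : ℝ) + c β v = 0)
    (hsym : c q (u - uj) = c p z) :
    g u - g uj = (inner ℝ (u - uj) (z - zj) : ℝ) + c β (z - zj) + c (p - β) z := by
  have hgal := hGal zj hzj
  have hd := hdual (u - uj)
  have hq : c q (u - uj) = c p z := hsym
  have hz : (inner ℝ z (u - uj) : ℝ) = inner ℝ (u - uj) z := real_inner_comm _ _
  have hg : g u - g uj = g (u - uj) := by rw [map_sub]
  rw [hg, ← hd, hz, hq]; simp only [inner_sub_right, map_sub, LinearMap.sub_apply]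
  linarith
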